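/- The language (ab)⁺ = {ab, abab, ababab, …} over Σ is ADT₂-definable but not ADT₁-definable. -/

import Mathlib

namespace ADTpaper

/-- Propositional formulas over a set `P` of propositional variables. -/
inductive PropForm (P : Type) : Type where
  | var : P → PropForm P
  | tru : PropForm P
  | fls : PropForm P
  | neg : PropForm P → PropForm P
  | conj : PropForm P → PropForm P → PropForm P
  | disj : PropForm P → PropForm P → PropForm P

/-- A valuation is a subset of `P` (an element of the alphabet `Σ = 2^P`). -/
abbrev Val (P : Type) : Type := Set P

/-- A trace is a finite word over the alphabet `Σ = 2^P`. -/
abbrev Trace (P : Type) : Type := List (Val P)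

/-- Satisfaction of a propositional formula by a valuation. -/
def PropForm.eval {P : Type} (v : Val P) : PropForm P → Prop
  | .var p => p ∈ v
  | .tru => True
  | .fls => False
  | .neg φ => ¬ PropForm.eval v φ
  | .conj φ ψ => PropForm.eval v φ ∧ PropForm.eval v ψ
  | .disj φ ψ => PropForm.eval v φ ∨ PropForm.eval v ψ

/-- Size of a propositional formula. -/
def PropForm.size {P : Type} : PropForm P → ℕ
  | .var _ => 1
  | .tru => 1
  | .fls => 1
  | .neg φ => PropForm.size φ + 1
  | .conj φ ψ => PropForm.size φ + PropForm.size ψ + 1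
  | .disj φ ψ => PropForm.size φ + PropForm.size ψ + 1

/-- Attack-defense trees over `P` (operators taken binary, w.l.o.g. by associativity). -/
inductive ADT (P : Type) : Type where
  | eps  : ADT P
  | leaf : PropForm P → ADT P
  | orA  : ADT P → ADT P → ADT P
  | sand : ADT P → ADT P → ADT P
  | andA : ADT P → ADT P → ADT P
  | cm   : ADT P → ADT P → ADT P

/-- Trace semantics of an adt: a language over the alphabet `Σ = 2^P`. -/
def sem {P : Type} : ADT P → Language (Val P)
  | .eps => 1
  | .leaf γ => {w | ∃ w' v, w = w' ++ [v] ∧ PropForm.eval v γ}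
  | .orA t₁ t₂ => sem t₁ ⊔ sem t₂
  | .sand t₁ t₂ => sem t₁ * sem t₂
  | .andA t₁ t₂ => (sem t₁ * ⊤ ⊓ sem t₂) ⊔ (sem t₂ * ⊤ ⊓ sem t₁)
  | .cm t₁ t₂ => sem t₁ \ sem t₂

/-- Countermeasure-depth of an adt. -/
def cd {P : Type} : ADT P → ℕ
  | .eps => 0
  | .leaf _ => 0
  | .orA t₁ t₂ => max (cd t₁) (cd t₂)
  | .sand t₁ t₂ => max (cd t₁) (cd t₂)
  | .andA t₁ t₂ => max (cd t₁) (cd t₂)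
  | .cm t₁ t₂ => max (cd t₁) (cd t₂ + 1)

/-- The size of an adt: the sum of the sizes of its leaves, the leaf `ε` having size 1. -/
def ADT.size {P : Type} : ADT P → ℕ
  | .eps => 1
  | .leaf γ => PropForm.size γ
  | .orA t₁ t₂ => ADT.size t₁ + ADT.size t₂
  | .sand t₁ t₂ => ADT.size t₁ + ADT.size t₂
  | .andA t₁ t₂ => ADT.size t₁ + ADT.size t₂
  | .cm t₁ t₂ => ADT.size t₁ + ADT.size t₂


/-- With `Prop = {p}` (here `P = Unit`), the letter `a := {p}` of `Σ = 2^{p}`. -/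
def aU : Val Unit := Set.univ

/-- With `Prop = {p}` (here `P = Unit`), the letter `b := ∅` of `Σ = 2^{p}`. -/
def bU : Val Unit := ∅

open Classical in
/-- `μ(w)`: the number of occurrences of `a = {p}` minus the number of occurrences of
`b = ∅` in the word `w` (every letter of `Σ = 2^{p}` is `a` or `b`). -/
noncomputable def muU : List (Val Unit) → ℤ
  | [] => 0
  | v :: w => (if () ∈ v then 1 else -1) + muU w

/-- The language `(ab)⁺ = {ab, abab, ababab, …}` over `Σ = 2^{p}`. -/
def abPlus : Language (Val Unit) :=
  {w | ∃ n : ℕ, 0 < n ∧ w = (List.replicate n [aU, bU]).flatten}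

/-! ### basics -/

lemma aU_ne_bU : aU ≠ bU := by
  intro h
  have : () ∈ aU := Set.mem_univ ()
  rw [h] at this
  exact this

lemma val_cases (v : Val Unit) : v = aU ∨ v = bU := by
  by_cases h : () ∈ v
  · left; ext x; cases x; simp [aU, h]
  · right; ext x; cases x; simp [bU, h]

/-- `(ab)^n` -/
def W : ℕ → Trace Unit
  | 0 => []
  | n + 1 => aU :: bU :: W n

@[simp] lemma W_zero : W 0 = [] := rfl
lemma W_succ (n : ℕ) : W (n+1) = aU :: bU :: W n := rfl

lemma W_add (m n : ℕ) : W (m + n) = W m ++ W n := by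
  induction m with
  | zero => simp
  | succ m ih => rw [Nat.succ_add, W_succ, W_succ, ih]; rfl

@[simp] lemma W_length (n : ℕ) : (W n).length = 2 * n := by
  induction n with
  | zero => rfl
  | succ n ih => rw [W_succ]; simp [ih]; omega

lemma W_ne_nil {n : ℕ} (h : 0 < n) : W n ≠ [] := by
  cases n with
  | zero => omega
  | succ n => simp [W_succ]

lemma W_eq_flatten (n : ℕ) : W n = (List.replicate n [aU, bU]).flatten := by
  induction n with
  | zero => rfl
  | succ n ih => rw [W_succ, List.replicate_succ, List.flatten_cons, ih]; rfl

lemma mem_abPlus_iff (w : Trace Unit) : w ∈ abPlus ↔ ∃ n, 0 < n ∧ w = W n := by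
  unfold abPlus
  constructor
  · rintro ⟨n, hn, rfl⟩; exact ⟨n, hn, (W_eq_flatten n).symm⟩
  · rintro ⟨n, hn, rfl⟩; exact ⟨n, hn, W_eq_flatten n⟩

/-! ### leaf membership -/

lemma mem_leaf_iff {γ : PropForm Unit} {w : Trace Unit} :
    w ∈ sem (ADT.leaf γ) ↔ ∃ h : w ≠ [], PropForm.eval (w.getLast h) γ := by
  constructor
  · rintro ⟨w', v, rfl, hv⟩
    refine ⟨by simp, ?_⟩
    rw [List.getLast_append]
    exact hv
  · rintro ⟨h, hv⟩
    exact ⟨w.dropLast, w.getLast h, (List.dropLast_append_getLast h).symm, hv⟩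

lemma mem_leaf_append {γ : PropForm Unit} {u w : Trace Unit} (hw : w ≠ []) :
    u ++ w ∈ sem (ADT.leaf γ) ↔ w ∈ sem (ADT.leaf γ) := by
  rw [mem_leaf_iff, mem_leaf_iff]
  constructor
  · rintro ⟨h, hv⟩
    refine ⟨hw, ?_⟩
    rwa [List.getLast_append_of_ne_nil _ hw] at hv
  · rintro ⟨h, hv⟩
    refine ⟨by simp [hw], ?_⟩
    rwa [List.getLast_append_of_ne_nil _ hw]

/-! ### insertion closure for cd = 0 -/

lemma insert0 : ∀ t : ADT Unit, cd t = 0 → ∀ u x v : Trace Unit, v ≠ [] →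
    u ++ v ∈ sem t → u ++ x ++ v ∈ sem t := by
  intro t
  induction t with
  | eps =>
    intro _ u x v hv h
    rw [sem, Language.mem_one] at h
    exact absurd (List.append_eq_nil_iff.mp h).2 hv
  | leaf γ =>
    intro _ u x v hv h
    rw [mem_leaf_append hv] at h
    rw [List.append_assoc, mem_leaf_append (by simp [hv])]
    rw [mem_leaf_append hv]
    exact h
  | orA t₁ t₂ ih₁ ih₂ =>
    intro hcd u x v hv h
    have h1 : cd t₁ = 0 ∧ cd t₂ = 0 := by simp [cd] at hcd; omega
    rcases h with h | h
    · exact Or.inl (ih₁ h1.1 u x v hv h)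
    · exact Or.inr (ih₂ h1.2 u x v hv h)
  | sand t₁ t₂ ih₁ ih₂ =>
    intro hcd u x v hv h
    have h1 : cd t₁ = 0 ∧ cd t₂ = 0 := by simp [cd] at hcd; omega
    rw [sem, Language.mem_mul] at h
    obtain ⟨p, hp, q, hq, hpq⟩ := h
    rw [sem, Language.mem_mul]
    rcases List.append_eq_append_iff.mp hpq.symm with ⟨w, hw1, hw2⟩ | ⟨w, hw1, hw2⟩
    · -- p = u ++ w, v = w ++ q
      rcases eq_or_ne w [] with rfl | hw
      · simp only [List.append_nil] at hw1
        simp only [List.nil_append] at hw2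
        subst hw1; subst hw2
        refine ⟨p, hp, x ++ v, ?_, by simp⟩
        simpa using ih₂ h1.2 [] x v hv (by simpa using hq)
      · subst hw1; subst hw2
        have hw' : w ≠ [] := hw
        exact ⟨u ++ x ++ w, ih₁ h1.1 u x w hw' hp, q, hq, by simp⟩
    · -- u = p ++ w, q = w ++ v
      subst hw1; subst hw2
      exact ⟨p, hp, w ++ x ++ v, ih₂ h1.2 w x v hv hq, by simp⟩
  | andA t₁ t₂ ih₁ ih₂ =>
    intro hcd u x v hv h
    have h1 : cd t₁ = 0 ∧ cd t₂ = 0 := by simp [cd] at hcd; omega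
    have key : ∀ (s₁ s₂ : ADT Unit),
        (∀ u x v : Trace Unit, v ≠ [] → u ++ v ∈ sem s₁ → u ++ x ++ v ∈ sem s₁) →
        (∀ u x v : Trace Unit, v ≠ [] → u ++ v ∈ sem s₂ → u ++ x ++ v ∈ sem s₂) →
        u ++ v ∈ sem s₁ * ⊤ ⊓ sem s₂ → u ++ x ++ v ∈ sem s₁ * ⊤ ⊓ sem s₂ := by
      rintro s₁ s₂ i₁ i₂ ⟨hm, h2⟩
      refine ⟨?_, i₂ u x v hv h2⟩
      replace hm := Language.mem_mul.mp hm; refine Language.mem_mul.mpr ?_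
      obtain ⟨p, hp, q, _, hpq⟩ := hm
      rcases List.append_eq_append_iff.mp hpq.symm with ⟨w, hw1, hw2⟩ | ⟨w, hw1, hw2⟩
      · rcases eq_or_ne w [] with rfl | hw
        · simp only [List.append_nil] at hw1
          subst hw1
          exact ⟨p, hp, x ++ v, trivial, by simp⟩
        · subst hw1; subst hw2
          have hw' : w ≠ [] := hw
          exact ⟨u ++ x ++ w, i₁ u x w hw' hp, q, trivial, by simp⟩
      · subst hw1
        exact ⟨p, hp, w ++ x ++ v, trivial, by simp [hw2]⟩
    rcases h with h | h
    · exact Or.inl (key t₁ t₂ (ih₁ h1.1) (ih₂ h1.2) h)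
    · exact Or.inr (key t₂ t₁ (ih₂ h1.2) (ih₁ h1.1) h)
  | cm t₁ t₂ ih₁ ih₂ =>
    intro hcd
    exfalso
    have h2 : cd t₂ + 1 ≤ max (cd t₁) (cd t₂ + 1) := le_max_right _ _
    rw [show max (cd t₁) (cd t₂ + 1) = cd (ADT.cm t₁ t₂) from rfl, hcd] at h2
    omega


/-! ### splitting lemmas -/

lemma split_W : ∀ (n : ℕ) (c q v : Trace Unit), c ++ q = W n ++ v →
    (∃ k m, n = k + m ∧ c = W k ∧ q = W m ++ v) ∨
    (∃ k m, n = k + m + 1 ∧ c = W k ++ [aU] ∧ q = bU :: (W m ++ v)) ∨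
    (∃ d, d ≤ v.length ∧ c = W n ++ v.take d ∧ q = v.drop d) := by
  intro n
  induction n with
  | zero =>
    intro c q v h
    simp only [W_zero, List.nil_append] at h
    refine Or.inr (Or.inr ⟨c.length, ?_, ?_, ?_⟩)
    · rw [← h]; simp
    · rw [← h]; simp
    · rw [← h]; simp
  | succ n ih =>
    intro c q v h
    rw [W_succ] at h
    match c with
    | [] =>
      exact Or.inl ⟨0, n + 1, by omega, rfl, by simpa [W_succ] using h⟩
    | [x] =>
      simp only [List.cons_append, List.nil_append, List.cons.injEq] at h
      obtain ⟨rfl, h⟩ := h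
      exact Or.inr (Or.inl ⟨0, n, by omega, by simp, by simp [← h]⟩)
    | x :: y :: c' =>
      simp only [List.cons_append, List.cons.injEq] at h
      obtain ⟨rfl, rfl, h⟩ := h
      rcases ih c' q v h with ⟨k, m, hn, hc, hq⟩ | ⟨k, m, hn, hc, hq⟩ | ⟨d, hd, hc, hq⟩
      · exact Or.inl ⟨k + 1, m, by omega, by simp [W_succ, hc], hq⟩
      · exact Or.inr (Or.inl ⟨k + 1, m, by omega, by simp [W_succ, hc], hq⟩)
      · exact Or.inr (Or.inr ⟨d, hd, by simp [W_succ, hc], hq⟩)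

lemma split_main {p q u v : Trace Unit} {n : ℕ} (h : p ++ q = u ++ (W n ++ v)) :
    (∃ d, d ≤ u.length ∧ p = u.take d ∧ q = u.drop d ++ (W n ++ v)) ∨
    (∃ k m, n = k + m ∧ p = u ++ W k ∧ q = W m ++ v) ∨
    (∃ k m, n = k + m + 1 ∧ p = u ++ (W k ++ [aU]) ∧ q = bU :: (W m ++ v)) ∨
    (∃ d, d ≤ v.length ∧ p = u ++ (W n ++ v.take d) ∧ q = v.drop d) := by
  rcases List.append_eq_append_iff.mp h with ⟨w, hw1, hw2⟩ | ⟨w, hw1, hw2⟩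
  · -- u = p ++ w, q = w ++ (W n ++ v)
    refine Or.inl ⟨p.length, ?_, ?_, ?_⟩
    · rw [hw1]; simp
    · rw [hw1]; simp
    · rw [hw1, hw2]; simp
  · -- p = u ++ w, W n ++ v = w ++ q
    rcases split_W n w q v hw2.symm with ⟨k, m, hn, hc, hq⟩ | ⟨k, m, hn, hc, hq⟩ | ⟨d, hd, hc, hq⟩
    · exact Or.inr (Or.inl ⟨k, m, hn, by rw [hw1, hc], hq⟩)
    · exact Or.inr (Or.inr (Or.inl ⟨k, m, hn, by rw [hw1, hc], hq⟩))
    · exact Or.inr (Or.inr (Or.inr ⟨d, hd, by rw [hw1, hc], hq⟩))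

/-! ### pigeonhole -/

lemma inf_or {P Q : ℕ → Prop} (h : ∀ N, ∃ n, N ≤ n ∧ (P n ∨ Q n)) :
    (∀ N, ∃ n, N ≤ n ∧ P n) ∨ (∀ N, ∃ n, N ≤ n ∧ Q n) := by
  by_contra hc
  push_neg at hc
  obtain ⟨⟨N₁, h₁⟩, ⟨N₂, h₂⟩⟩ := hc
  obtain ⟨n, hn, hpq⟩ := h (max N₁ N₂)
  rcases hpq with hp | hq
  · exact h₁ n (le_trans (le_max_left _ _) hn) hp
  · exact h₂ n (le_trans (le_max_right _ _) hn) hq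

lemma inf_bdd : ∀ (M : ℕ) (P : ℕ → ℕ → Prop),
    (∀ N, ∃ n, N ≤ n ∧ ∃ i, i ≤ M ∧ P i n) →
    ∃ i, i ≤ M ∧ ∀ N, ∃ n, N ≤ n ∧ P i n := by
  intro M
  induction M with
  | zero =>
    intro P h
    refine ⟨0, le_refl _, fun N => ?_⟩
    obtain ⟨n, hn, i, hi, hp⟩ := h N
    exact ⟨n, hn, by rwa [Nat.le_zero.mp hi] at hp⟩
  | succ M ih =>
    intro P h
    by_cases hM : ∀ N, ∃ n, N ≤ n ∧ P (M + 1) n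
    · exact ⟨M + 1, le_refl _, hM⟩
    · push_neg at hM
      obtain ⟨N₀, hN₀⟩ := hM
      have hpre : ∀ N, ∃ n, N ≤ n ∧ ∃ i, i ≤ M ∧ P i n := by
        intro N
        obtain ⟨n, hn, i, hi, hp⟩ := h (max N N₀)
        refine ⟨n, le_trans (le_max_left _ _) hn, i, ?_, hp⟩
        by_contra h'
        have : i = M + 1 := by omega
        subst this
        exact hN₀ n (le_trans (le_max_right _ _) hn) hp
      obtain ⟨i, hi, hinf⟩ := ih P hpre
      exact ⟨i, by omega, hinf⟩


/-! ### main induction -/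

def Inf (L : Language (Val Unit)) (u v : Trace Unit) : Prop :=
  ∀ N, ∃ n, N ≤ n ∧ u ++ (W n ++ v) ∈ L

def tgt (u : Trace Unit) (i j : ℕ) (v : Trace Unit) : Trace Unit :=
  u ++ (W i ++ (aU :: (W j ++ v)))

lemma W_one_add (i : ℕ) : W (1 + i) = aU :: bU :: W i := by
  rw [Nat.add_comm]; rfl

lemma W_one : W 1 = [aU, bU] := rfl

lemma take_drop_tgt {u : Trace Unit} (d i j : ℕ) (v : Trace Unit) :
    u.take d ++ tgt (u.drop d) i j v = tgt u i j v := by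
  rw [tgt, tgt, ← List.append_assoc, List.take_append_drop]

lemma tgt_append (u : Trace Unit) (i j : ℕ) (v₁ v₂ : Trace Unit) :
    tgt u i j v₁ ++ v₂ = tgt u i j (v₁ ++ v₂) := by
  simp [tgt]

lemma tgt_shift (u : Trace Unit) (k i j : ℕ) (v : Trace Unit) :
    (u ++ W k) ++ tgt [] i j v = tgt u (k + i) j v := by
  simp [tgt, W_add]

lemma tgt_mid (u : Trace Unit) (k i j : ℕ) (v : Trace Unit) :
    (u ++ (W k ++ [aU])) ++ tgt [bU] i j v = tgt u (k + (1 + i)) j v := by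
  simp [tgt, W_add, W_one_add, W_one]

lemma tgt_absorb (u : Trace Unit) (i j m : ℕ) (v : Trace Unit) :
    tgt u i j [] ++ (W m ++ v) = tgt u i (j + m) v := by
  simp [tgt, W_add]

lemma tgt_absorb_a (u : Trace Unit) (i j m : ℕ) (v : Trace Unit) :
    tgt u i j [aU] ++ (bU :: (W m ++ v)) = tgt u i (j + (1 + m)) v := by
  simp [tgt, W_add, W_one_add, W_one]

lemma W_snoc : ∀ n : ℕ, 0 < n → ∃ w, W n = w ++ [bU] := by
  intro n
  induction n with
  | zero => omega
  | succ n ih =>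
    intro _
    rcases Nat.eq_zero_or_pos n with rfl | hn
    · exact ⟨[aU], rfl⟩
    · obtain ⟨w, hw⟩ := ih hn
      exact ⟨aU :: bU :: w, by rw [W_succ, hw]; rfl⟩

lemma mem_leaf_snoc {γ : PropForm Unit} {w : Trace Unit} {x : Val Unit} :
    w ++ [x] ∈ sem (ADT.leaf γ) ↔ PropForm.eval x γ := by
  constructor
  · rintro ⟨w', v', heq, hev⟩
    have h1 : (w ++ [x]).getLast? = some x := List.getLast?_concat
    rw [heq, List.getLast?_concat] at h1
    rwa [Option.some_inj.mp h1] at hev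
  · intro h; exact ⟨w, x, rfl, h⟩

lemma pump0 {t : ADT Unit} (h0 : cd t = 0) {u v : Trace Unit} {m : ℕ} (hm : 0 < m)
    (h : u ++ (W m ++ v) ∈ sem t) (d : ℕ) : u ++ (W (d + m) ++ v) ∈ sem t := by
  have h2 := insert0 t h0 u (W d) (W m ++ v)
    (by intro hc; exact W_ne_nil hm (List.append_eq_nil_iff.mp hc).1) h
  rw [W_add]
  simpa [List.append_assoc] using h2

lemma key : ∀ t : ADT Unit, cd t ≤ 1 → ∀ u v : Trace Unit, Inf (sem t) u v →
    ∃ i₀ j₀, 1 ≤ j₀ ∧ ∀ i j, i₀ ≤ i → j₀ ≤ j → tgt u i j v ∈ sem t := by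
  intro t
  induction t with
  | eps =>
    intro _ u v hinf
    obtain ⟨n, hn, h⟩ := hinf 1
    rw [sem, Language.mem_one] at h
    exact absurd (List.append_eq_nil_iff.mp (List.append_eq_nil_iff.mp h).2).1 (W_ne_nil (by omega))
  | leaf γ =>
    intro _ u v hinf
    obtain ⟨n, hn, h⟩ := hinf 1
    refine ⟨0, 1, le_refl _, ?_⟩
    intro i j _ hj
    rcases v with _ | ⟨x, v'⟩
    · obtain ⟨w, hw⟩ := W_snoc n (by omega)
      rw [List.append_nil, hw, ← List.append_assoc] at h
      have hev : PropForm.eval bU γ := mem_leaf_snoc.mp h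
      obtain ⟨wj, hwj⟩ := W_snoc j (by omega)
      have heq : tgt u i j [] = (u ++ (W i ++ (aU :: wj))) ++ [bU] := by
        rw [tgt, hwj]; simp
      rw [heq]
      exact mem_leaf_snoc.mpr hev
    · have hvne : (x :: v' : Trace Unit) ≠ [] := by simp
      rw [← List.append_assoc] at h
      have hv := (mem_leaf_append hvne).mp h
      have heq : tgt u i j (x :: v') = (u ++ (W i ++ (aU :: W j))) ++ (x :: v') := by
        simp [tgt]
      rw [heq]
      exact (mem_leaf_append hvne).mpr hv
  | orA t₁ t₂ ih₁ ih₂ =>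
    intro hcd u v hinf
    simp only [cd, max_le_iff] at hcd
    have hinf' : ∀ N, ∃ n, N ≤ n ∧
        (u ++ (W n ++ v) ∈ sem t₁ ∨ u ++ (W n ++ v) ∈ sem t₂) := hinf
    rcases inf_or hinf' with h | h
    · obtain ⟨i₀, j₀, hj₀, hr⟩ := ih₁ hcd.1 u v h
      exact ⟨i₀, j₀, hj₀, fun i j hi hj => Or.inl (hr i j hi hj)⟩
    · obtain ⟨i₀, j₀, hj₀, hr⟩ := ih₂ hcd.2 u v h
      exact ⟨i₀, j₀, hj₀, fun i j hi hj => Or.inr (hr i j hi hj)⟩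
  | cm t₁ t₂ ih₁ ih₂ =>
    intro hcd u v hinf
    simp only [cd, max_le_iff] at hcd
    have hc2 : cd t₂ = 0 := by omega
    have hinf1 : Inf (sem t₁) u v := fun N => by
      obtain ⟨n, hn, h⟩ := hinf N
      exact ⟨n, hn, h.1⟩
    obtain ⟨i₀, j₀, hj₀, hr⟩ := ih₁ hcd.1 u v hinf1
    refine ⟨i₀, j₀, hj₀, fun i j hi hj => ⟨hr i j hi hj, ?_⟩⟩
    intro hmem
    -- from tgt u i j v ∈ sem t₂ derive a contradiction with hinf
    have h1 : (u ++ (W i ++ [aU])) ++ (W j ++ v) ∈ sem t₂ := by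
      have : tgt u i j v = (u ++ (W i ++ [aU])) ++ (W j ++ v) := by simp [tgt]
      rwa [this] at hmem
    have h2 := insert0 t₂ hc2 (u ++ (W i ++ [aU])) [bU] (W j ++ v)
      (by intro hc; exact W_ne_nil (by omega : 0 < j) (List.append_eq_nil_iff.mp hc).1) h1
    have h3 : u ++ (W (i + 1 + j) ++ v) ∈ sem t₂ := by
      have heq : (u ++ (W i ++ [aU])) ++ [bU] ++ (W j ++ v) = u ++ (W (i + 1 + j) ++ v) := by
        rw [show i + 1 + j = i + (1 + j) from by omega, W_add, W_one_add]
        simp [W_succ]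
      rwa [heq] at h2
    obtain ⟨n, hn, hmem'⟩ := hinf (i + 1 + j)
    apply hmem'.2
    have := pump0 hc2 (by omega : 0 < i + 1 + j) h3 (n - (i + 1 + j))
    rwa [show n - (i + 1 + j) + (i + 1 + j) = n from by omega] at this
  | sand t₁ t₂ ih₁ ih₂ =>
    intro hcd u v hinf
    simp only [cd, max_le_iff] at hcd
    have hinf' : ∀ N, ∃ n, N ≤ n ∧
        ((∃ d, d ≤ u.length ∧ u.take d ∈ sem t₁ ∧ u.drop d ++ (W n ++ v) ∈ sem t₂) ∨
        ((∃ k m, n = k + m ∧ u ++ W k ∈ sem t₁ ∧ W m ++ v ∈ sem t₂) ∨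
        ((∃ k m, n = k + m + 1 ∧ u ++ (W k ++ [aU]) ∈ sem t₁ ∧ bU :: (W m ++ v) ∈ sem t₂) ∨
        (∃ d, d ≤ v.length ∧ u ++ (W n ++ v.take d) ∈ sem t₁ ∧ v.drop d ∈ sem t₂)))) := by
      intro N
      obtain ⟨n, hn, h⟩ := hinf N
      rw [sem, Language.mem_mul] at h
      obtain ⟨p, hp, q, hq, hpq⟩ := h
      refine ⟨n, hn, ?_⟩
      rcases split_main hpq with ⟨d, hd, h1, h2⟩ | ⟨k, m, h0, h1, h2⟩ |
        ⟨k, m, h0, h1, h2⟩ | ⟨d, hd, h1, h2⟩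
      · exact Or.inl ⟨d, hd, h1 ▸ hp, h2 ▸ hq⟩
      · exact Or.inr (Or.inl ⟨k, m, h0, h1 ▸ hp, h2 ▸ hq⟩)
      · exact Or.inr (Or.inr (Or.inl ⟨k, m, h0, h1 ▸ hp, h2 ▸ hq⟩))
      · exact Or.inr (Or.inr (Or.inr ⟨d, hd, h1 ▸ hp, h2 ▸ hq⟩))
    rcases inf_or hinf' with hP | h'
    · -- split inside u
      obtain ⟨d, hd, hfix⟩ := inf_bdd u.length
        (fun d n => u.take d ∈ sem t₁ ∧ u.drop d ++ (W n ++ v) ∈ sem t₂) hP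
      obtain ⟨n₀, -, hp, -⟩ := hfix 0
      have hinf2 : Inf (sem t₂) (u.drop d) v := fun N => by
        obtain ⟨n, hn, -, h2⟩ := hfix N
        exact ⟨n, hn, h2⟩
      obtain ⟨i₂, j₂, hj₂, hr⟩ := ih₂ hcd.2 (u.drop d) v hinf2
      refine ⟨i₂, j₂, hj₂, fun i j hi hj => ?_⟩
      rw [sem, Language.mem_mul]
      exact ⟨u.take d, hp, tgt (u.drop d) i j v, hr i j hi hj, take_drop_tgt d i j v⟩
    rcases inf_or h' with hP | h'
    · -- split at block boundary inside W n
      by_cases hk : ∀ K, ∃ k, K ≤ k ∧ u ++ W k ∈ sem t₁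
      · obtain ⟨n₀, -, k₀, m₀, -, -, hm₀⟩ := hP 0
        have hinf1 : Inf (sem t₁) u [] := fun N => by
          obtain ⟨k, hk', hmem⟩ := hk N
          exact ⟨k, hk', by simpa using hmem⟩
        obtain ⟨i₁, j₁, hj₁, hr⟩ := ih₁ hcd.1 u [] hinf1
        refine ⟨i₁, j₁ + m₀, by omega, fun i j hi hj => ?_⟩
        obtain ⟨j', hj', rfl⟩ : ∃ j', j₁ ≤ j' ∧ j = j' + m₀ := ⟨j - m₀, by omega, by omega⟩
        rw [sem, Language.mem_mul]
        exact ⟨tgt u i j' [], hr i j' hi hj', W m₀ ++ v, hm₀, tgt_absorb u i j' m₀ v⟩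
      · push_neg at hk
        obtain ⟨K₀, hK₀⟩ := hk
        have hbdd : ∀ N, ∃ n, N ≤ n ∧ ∃ k, k ≤ K₀ ∧
            ∃ m, n = k + m ∧ u ++ W k ∈ sem t₁ ∧ W m ++ v ∈ sem t₂ := by
          intro N
          obtain ⟨n, hn, k, m, h0, h1, h2⟩ := hP N
          refine ⟨n, hn, k, ?_, m, h0, h1, h2⟩
          by_contra hc
          exact hK₀ k (by omega) h1
        obtain ⟨k, hkK, hfix⟩ := inf_bdd K₀ _ hbdd
        obtain ⟨n₀, -, m₀, -, hk1, -⟩ := hfix 0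
        have hinf2 : Inf (sem t₂) [] v := fun M => by
          obtain ⟨n, hn, m, h0, -, h2⟩ := hfix (k + M)
          exact ⟨m, by omega, by simpa using h2⟩
        obtain ⟨i₂, j₂, hj₂, hr⟩ := ih₂ hcd.2 [] v hinf2
        refine ⟨k + i₂, j₂, hj₂, fun i j hi hj => ?_⟩
        obtain ⟨i', hi', rfl⟩ : ∃ i', i₂ ≤ i' ∧ i = k + i' := ⟨i - k, by omega, by omega⟩
        rw [sem, Language.mem_mul]
        exact ⟨u ++ W k, hk1, tgt [] i' j v, hr i' j hi' hj, tgt_shift u k i' j v⟩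
    rcases inf_or h' with hP | hP
    · -- split in the middle of a block
      by_cases hk : ∀ K, ∃ k, K ≤ k ∧ u ++ (W k ++ [aU]) ∈ sem t₁
      · obtain ⟨n₀, -, k₀, m₀, -, -, hm₀⟩ := hP 0
        have hinf1 : Inf (sem t₁) u [aU] := fun N => by
          obtain ⟨k, hk', hmem⟩ := hk N
          exact ⟨k, hk', hmem⟩
        obtain ⟨i₁, j₁, hj₁, hr⟩ := ih₁ hcd.1 u [aU] hinf1
        refine ⟨i₁, j₁ + (1 + m₀), by omega, fun i j hi hj => ?_⟩
        obtain ⟨j', hj', rfl⟩ : ∃ j', j₁ ≤ j' ∧ j = j' + (1 + m₀) :=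
          ⟨j - 1 - m₀, by omega, by omega⟩
        rw [sem, Language.mem_mul]
        exact ⟨tgt u i j' [aU], hr i j' hi hj', bU :: (W m₀ ++ v), hm₀,
          tgt_absorb_a u i j' m₀ v⟩
      · push_neg at hk
        obtain ⟨K₀, hK₀⟩ := hk
        have hbdd : ∀ N, ∃ n, N ≤ n ∧ ∃ k, k ≤ K₀ ∧
            ∃ m, n = k + m + 1 ∧ u ++ (W k ++ [aU]) ∈ sem t₁ ∧ bU :: (W m ++ v) ∈ sem t₂ := by
          intro N
          obtain ⟨n, hn, k, m, h0, h1, h2⟩ := hP N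
          refine ⟨n, hn, k, ?_, m, h0, h1, h2⟩
          by_contra hc
          exact hK₀ k (by omega) h1
        obtain ⟨k, hkK, hfix⟩ := inf_bdd K₀ _ hbdd
        obtain ⟨n₀, -, m₀, -, hk1, -⟩ := hfix 0
        have hinf2 : Inf (sem t₂) [bU] v := fun M => by
          obtain ⟨n, hn, m, h0, -, h2⟩ := hfix (k + M + 1)
          exact ⟨m, by omega, h2⟩
        obtain ⟨i₂, j₂, hj₂, hr⟩ := ih₂ hcd.2 [bU] v hinf2
        refine ⟨k + (1 + i₂), j₂, hj₂, fun i j hi hj => ?_⟩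
        obtain ⟨i', hi', rfl⟩ : ∃ i', i₂ ≤ i' ∧ i = k + (1 + i') :=
          ⟨i - k - 1, by omega, by omega⟩
        rw [sem, Language.mem_mul]
        exact ⟨u ++ (W k ++ [aU]), hk1, tgt [bU] i' j v, hr i' j hi' hj, tgt_mid u k i' j v⟩
    · -- split inside v
      obtain ⟨d, hd, hfix⟩ := inf_bdd v.length
        (fun d n => u ++ (W n ++ v.take d) ∈ sem t₁ ∧ v.drop d ∈ sem t₂) hP
      obtain ⟨n₀, -, -, hq⟩ := hfix 0
      have hinf1 : Inf (sem t₁) u (v.take d) := fun N => by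
        obtain ⟨n, hn, h1, -⟩ := hfix N
        exact ⟨n, hn, h1⟩
      obtain ⟨i₁, j₁, hj₁, hr⟩ := ih₁ hcd.1 u (v.take d) hinf1
      refine ⟨i₁, j₁, hj₁, fun i j hi hj => ?_⟩
      rw [sem, Language.mem_mul]
      refine ⟨tgt u i j (v.take d), hr i j hi hj, v.drop d, hq, ?_⟩
      rw [tgt_append, List.take_append_drop]
  | andA t₁ t₂ ih₁ ih₂ =>
    intro hcd u v hinf
    simp only [cd, max_le_iff] at hcd
    have main : ∀ (s₁ s₂ : ADT Unit),
        (∀ u' v' : Trace Unit, Inf (sem s₁) u' v' →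
          ∃ i₀ j₀, 1 ≤ j₀ ∧ ∀ i j, i₀ ≤ i → j₀ ≤ j → tgt u' i j v' ∈ sem s₁) →
        (∀ u' v' : Trace Unit, Inf (sem s₂) u' v' →
          ∃ i₀ j₀, 1 ≤ j₀ ∧ ∀ i j, i₀ ≤ i → j₀ ≤ j → tgt u' i j v' ∈ sem s₂) →
        (∀ N, ∃ n, N ≤ n ∧ u ++ (W n ++ v) ∈ sem s₁ * ⊤ ⊓ sem s₂) →
        ∃ i₀ j₀, 1 ≤ j₀ ∧ ∀ i j, i₀ ≤ i → j₀ ≤ j →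
          tgt u i j v ∈ sem s₁ * ⊤ ⊓ sem s₂ := by
      intro s₁ s₂ H1 H2 hin
      have hin2 : Inf (sem s₂) u v := fun N => by
        obtain ⟨n, hn, h⟩ := hin N
        exact ⟨n, hn, h.2⟩
      obtain ⟨i₂, j₂, hj₂, hr₂⟩ := H2 u v hin2
      have hin1 : ∀ N, ∃ n, N ≤ n ∧
          ((∃ d, d ≤ u.length ∧ u.take d ∈ sem s₁) ∨
          ((∃ k, u ++ W k ∈ sem s₁) ∨
          ((∃ k, u ++ (W k ++ [aU]) ∈ sem s₁) ∨
          (∃ d, d ≤ v.length ∧ u ++ (W n ++ v.take d) ∈ sem s₁)))) := by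
        intro N
        obtain ⟨n, hn, h⟩ := hin N
        obtain ⟨p, hp, q, -, hpq⟩ := Language.mem_mul.mp h.1
        refine ⟨n, hn, ?_⟩
        rcases split_main hpq with ⟨d, hd, h1, -⟩ | ⟨k, m, -, h1, -⟩ |
          ⟨k, m, -, h1, -⟩ | ⟨d, hd, h1, -⟩
        · exact Or.inl ⟨d, hd, h1 ▸ hp⟩
        · exact Or.inr (Or.inl ⟨k, h1 ▸ hp⟩)
        · exact Or.inr (Or.inr (Or.inl ⟨k, h1 ▸ hp⟩))
        · exact Or.inr (Or.inr (Or.inr ⟨d, hd, h1 ▸ hp⟩))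
      rcases inf_or hin1 with hQ | h'
      · obtain ⟨n₀, -, d, hd, hp⟩ := hQ 0
        refine ⟨i₂, j₂, hj₂, fun i j hi hj => ⟨?_, hr₂ i j hi hj⟩⟩
        refine Language.mem_mul.mpr ?_
        exact ⟨u.take d, hp, tgt (u.drop d) i j v, trivial, take_drop_tgt d i j v⟩
      rcases inf_or h' with hQ | h'
      · obtain ⟨n₀, -, k, hp⟩ := hQ 0
        refine ⟨max i₂ k, j₂, hj₂, fun i j hi hj => ⟨?_, hr₂ i j (le_trans (le_max_left _ _) hi) hj⟩⟩
        obtain ⟨i', rfl⟩ : ∃ i', i = k + i' := ⟨i - k, by omega⟩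
        refine Language.mem_mul.mpr ?_
        exact ⟨u ++ W k, hp, tgt [] i' j v, trivial, tgt_shift u k i' j v⟩
      rcases inf_or h' with hQ | hQ
      · obtain ⟨n₀, -, k, hp⟩ := hQ 0
        refine ⟨max i₂ (k + 1), j₂, hj₂, fun i j hi hj =>
          ⟨?_, hr₂ i j (le_trans (le_max_left _ _) hi) hj⟩⟩
        obtain ⟨i', rfl⟩ : ∃ i', i = k + (1 + i') := ⟨i - k - 1, by omega⟩
        refine Language.mem_mul.mpr ?_
        exact ⟨u ++ (W k ++ [aU]), hp, tgt [bU] i' j v, trivial, tgt_mid u k i' j v⟩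
      · obtain ⟨d, hd, hfix⟩ := inf_bdd v.length
          (fun d n => u ++ (W n ++ v.take d) ∈ sem s₁) hQ
        have hinf1 : Inf (sem s₁) u (v.take d) := hfix
        obtain ⟨i₁, j₁, hj₁, hr₁⟩ := H1 u (v.take d) hinf1
        refine ⟨max i₁ i₂, max j₁ j₂, by omega, fun i j hi hj =>
          ⟨?_, hr₂ i j (le_trans (le_max_right _ _) hi) (le_trans (le_max_right _ _) hj)⟩⟩
        refine Language.mem_mul.mpr ?_
        refine ⟨tgt u i j (v.take d),
          hr₁ i j (le_trans (le_max_left _ _) hi) (le_trans (le_max_left _ _) hj),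
          v.drop d, trivial, ?_⟩
        rw [tgt_append, List.take_append_drop]
    have hinf' : ∀ N, ∃ n, N ≤ n ∧
        (u ++ (W n ++ v) ∈ sem t₁ * ⊤ ⊓ sem t₂ ∨
         u ++ (W n ++ v) ∈ sem t₂ * ⊤ ⊓ sem t₁) := hinf
    rcases inf_or hinf' with h | h
    · obtain ⟨i₀, j₀, hj₀, hr⟩ := main t₁ t₂ (ih₁ hcd.1) (ih₂ hcd.2) h
      exact ⟨i₀, j₀, hj₀, fun i j hi hj => Or.inl (hr i j hi hj)⟩
    · obtain ⟨i₀, j₀, hj₀, hr⟩ := main t₂ t₁ (ih₂ hcd.2) (ih₁ hcd.1) h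
      exact ⟨i₀, j₀, hj₀, fun i j hi hj => Or.inr (hr i j hi hj)⟩


/-! ### the ADT₂ tree -/

def γa : PropForm Unit := PropForm.var ()
def γb : PropForm Unit := PropForm.neg (PropForm.var ())
def Ltru : ADT Unit := ADT.leaf PropForm.tru
def Tstar : ADT Unit := ADT.orA ADT.eps Ltru
def len2 : ADT Unit := ADT.sand Ltru Ltru
def singA : ADT Unit := ADT.cm (ADT.leaf γa) len2
def singB : ADT Unit := ADT.cm (ADT.leaf γb) len2
def Xtree : ADT Unit := ADT.sand singA (ADT.sand Tstar singB)
def AAtree : ADT Unit := ADT.sand (ADT.leaf γa) (ADT.sand singA Tstar)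
def BBtree : ADT Unit := ADT.sand (ADT.leaf γb) (ADT.sand singB Tstar)
def Ttree : ADT Unit := ADT.cm Xtree (ADT.orA AAtree BBtree)

lemma cd_Ttree : cd Ttree ≤ 2 := by
  simp [Ttree, Xtree, AAtree, BBtree, singA, singB, len2, Ltru, Tstar, cd]

lemma mem_tru {w : Trace Unit} : w ∈ sem Ltru ↔ w ≠ [] := by
  constructor
  · rintro ⟨w', v, rfl, -⟩; simp
  · intro h
    exact ⟨w.dropLast, w.getLast h, (List.dropLast_append_getLast h).symm, trivial⟩

lemma mem_Tstar (w : Trace Unit) : w ∈ sem Tstar := by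
  rcases eq_or_ne w [] with rfl | h
  · exact Or.inl (Language.mem_one _ |>.mpr rfl)
  · exact Or.inr (mem_tru.mpr h)

lemma mem_len2 {w : Trace Unit} : w ∈ sem len2 ↔ 2 ≤ w.length := by
  constructor
  · intro h
    rw [len2, sem, Language.mem_mul] at h
    obtain ⟨p, hp, q, hq, rfl⟩ := h
    rw [mem_tru] at hp hq
    have h1 : 1 ≤ p.length := List.length_pos_iff.mpr hp
    have h2 : 1 ≤ q.length := List.length_pos_iff.mpr hq
    simp only [List.length_append]
    omega
  · intro h
    match w with
    | x :: y :: r =>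
      rw [len2, sem, Language.mem_mul]
      exact ⟨[x], mem_tru.mpr (by simp), y :: r, mem_tru.mpr (by simp), rfl⟩

lemma mem_singA {w : Trace Unit} : w ∈ sem singA ↔ w = [aU] := by
  constructor
  · rintro ⟨⟨w', v, rfl, hev⟩, hlen⟩
    replace hlen : ¬ 2 ≤ _ := fun h => hlen (mem_len2.mpr h)
    push_neg at hlen
    simp only [List.length_append, List.length_cons, List.length_nil] at hlen
    have hw' : w' = [] := by
      cases w' with
      | nil => rfl
      | cons a l => simp at hlen
    subst hw'
    have : v = aU := by
      ext x; cases x; simp [aU]; exact hev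
    rw [this]; rfl
  · rintro rfl
    refine ⟨⟨[], aU, rfl, ?_⟩, ?_⟩
    · exact Set.mem_univ ()
    · exact fun h => absurd (mem_len2.mp h) (by simp)

lemma mem_singB {w : Trace Unit} : w ∈ sem singB ↔ w = [bU] := by
  constructor
  · rintro ⟨⟨w', v, rfl, hev⟩, hlen⟩
    replace hlen : ¬ 2 ≤ _ := fun h => hlen (mem_len2.mpr h)
    push_neg at hlen
    simp only [List.length_append, List.length_cons, List.length_nil] at hlen
    have hw' : w' = [] := by
      cases w' with
      | nil => rfl
      | cons a l => simp at hlen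
    subst hw'
    have : v = bU := by
      ext x; cases x; simp [bU]; exact hev
    rw [this]; rfl
  · rintro rfl
    refine ⟨⟨[], bU, rfl, ?_⟩, ?_⟩
    · intro h; exact h
    · exact fun h => absurd (mem_len2.mp h) (by simp)

lemma mem_X_iff {w : Trace Unit} : w ∈ sem Xtree ↔ ∃ q, w = aU :: (q ++ [bU]) := by
  constructor
  · intro h
    rw [Xtree, sem, Language.mem_mul] at h
    obtain ⟨p, hp, r, hr, rfl⟩ := h
    rw [mem_singA] at hp
    rw [sem, Language.mem_mul] at hr
    obtain ⟨q, -, q', hq', rfl⟩ := hr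
    rw [mem_singB] at hq'
    subst hp; subst hq'
    exact ⟨q, rfl⟩
  · rintro ⟨q, rfl⟩
    rw [Xtree, sem, Language.mem_mul]
    refine ⟨[aU], mem_singA.mpr rfl, q ++ [bU], ?_, rfl⟩
    rw [sem, Language.mem_mul]
    exact ⟨q, mem_Tstar q, [bU], mem_singB.mpr rfl, rfl⟩

lemma mem_AA_iff {w : Trace Unit} : w ∈ sem AAtree ↔ ∃ p s, w = p ++ (aU :: aU :: s) := by
  constructor
  · intro h
    rw [AAtree, sem, Language.mem_mul] at h
    obtain ⟨p, hp, r, hr, rfl⟩ := h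
    rw [sem, Language.mem_mul] at hr
    obtain ⟨q, hq, q', -, rfl⟩ := hr
    rw [mem_singA] at hq
    subst hq
    obtain ⟨p', v, rfl, hev⟩ := hp
    have hv : v = aU := by
      ext x; cases x; simp [aU]; exact hev
    subst hv
    exact ⟨p', q', by simp⟩
  · rintro ⟨p, s, rfl⟩
    rw [AAtree, sem, Language.mem_mul]
    refine ⟨p ++ [aU], ⟨p, aU, rfl, Set.mem_univ ()⟩, aU :: s, ?_, by simp⟩
    rw [sem, Language.mem_mul]
    exact ⟨[aU], mem_singA.mpr rfl, s, mem_Tstar s, rfl⟩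

lemma mem_BB_iff {w : Trace Unit} : w ∈ sem BBtree ↔ ∃ p s, w = p ++ (bU :: bU :: s) := by
  constructor
  · intro h
    rw [BBtree, sem, Language.mem_mul] at h
    obtain ⟨p, hp, r, hr, rfl⟩ := h
    rw [sem, Language.mem_mul] at hr
    obtain ⟨q, hq, q', -, rfl⟩ := hr
    rw [mem_singB] at hq
    subst hq
    obtain ⟨p', v, rfl, hev⟩ := hp
    have hv : v = bU := by
      ext x; cases x; simp [bU]; exact fun hx => hev hx
    subst hv
    exact ⟨p', q', by simp⟩
  · rintro ⟨p, s, rfl⟩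
    rw [BBtree, sem, Language.mem_mul]
    refine ⟨p ++ [bU], ⟨p, bU, rfl, fun hx => hx⟩, bU :: s, ?_, by simp⟩
    rw [sem, Language.mem_mul]
    exact ⟨[bU], mem_singB.mpr rfl, s, mem_Tstar s, rfl⟩

lemma W_no_aa : ∀ (n : ℕ) (p s : Trace Unit), W n ≠ p ++ (aU :: aU :: s) := by
  intro n
  induction n with
  | zero => intro p s h; simp [W_zero] at h
  | succ n ih =>
    intro p s h
    rw [W_succ] at h
    match p, h with
    | [], h =>
      simp only [List.nil_append, List.cons.injEq] at h
      exact aU_ne_bU (h.2.1.symm)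
    | [x], h =>
      simp only [List.cons_append, List.nil_append, List.cons.injEq] at h
      exact aU_ne_bU h.2.1.symm
    | x :: y :: p', h =>
      simp only [List.cons_append, List.cons.injEq] at h
      exact ih p' s h.2.2

lemma W_no_bb : ∀ (n : ℕ) (p s : Trace Unit), W n ≠ p ++ (bU :: bU :: s) := by
  intro n
  induction n with
  | zero => intro p s h; simp [W_zero] at h
  | succ n ih =>
    intro p s h
    rw [W_succ] at h
    match p, h with
    | [], h =>
      simp only [List.nil_append, List.cons.injEq] at h
      exact aU_ne_bU h.1
    | [x], h =>
      simp only [List.cons_append, List.nil_append, List.cons.injEq] at h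
      obtain ⟨-, -, h⟩ := h
      match n, h with
      | 0, h => simp [W_zero] at h
      | n + 1, h =>
        rw [W_succ] at h
        simp only [List.cons.injEq] at h
        exact aU_ne_bU h.1
    | x :: y :: p', h =>
      simp only [List.cons_append, List.cons.injEq] at h
      exact ih p' s h.2.2

lemma bW_snoc : ∀ m : ℕ, ∃ q, bU :: W m = q ++ [bU] := by
  intro m
  induction m with
  | zero => exact ⟨[], rfl⟩
  | succ m ih =>
    obtain ⟨q, hq⟩ := ih
    refine ⟨bU :: aU :: q, ?_⟩
    rw [W_succ]
    simp only [List.cons_append]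
    rw [← hq]

lemma rec_aux : ∀ (L : ℕ) (q : Trace Unit), q.length ≤ L →
    (∀ p s, aU :: (q ++ [bU]) ≠ p ++ (aU :: aU :: s)) →
    (∀ p s, aU :: (q ++ [bU]) ≠ p ++ (bU :: bU :: s)) →
    ∃ n, 0 < n ∧ aU :: (q ++ [bU]) = W n := by
  intro L
  induction L with
  | zero =>
    intro q hq _ _
    have : q = [] := List.length_eq_zero_iff.mp (by omega)
    subst this
    exact ⟨1, by omega, rfl⟩
  | succ L ih =>
    intro q hq hnaa hnbb
    match q with
    | [] => exact ⟨1, by omega, rfl⟩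
    | y :: q' =>
      rcases val_cases y with rfl | rfl
      · exact absurd rfl (hnaa [] (q' ++ [bU]))
      · match q' with
        | [] => exact absurd rfl (hnbb [aU] [])
        | z :: q'' =>
          rcases val_cases z with rfl | rfl
          · have hlen : q''.length ≤ L := by
              simp only [List.length_cons] at hq ⊢
              omega
            have hnaa' : ∀ p s, aU :: (q'' ++ [bU]) ≠ p ++ (aU :: aU :: s) := by
              intro p s h
              exact hnaa (aU :: bU :: p) s (by simp only [List.cons_append]; rw [h])
            have hnbb' : ∀ p s, aU :: (q'' ++ [bU]) ≠ p ++ (bU :: bU :: s) := by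
              intro p s h
              exact hnbb (aU :: bU :: p) s (by simp only [List.cons_append]; rw [h])
            obtain ⟨n, hn, heq⟩ := ih q'' hlen hnaa' hnbb'
            refine ⟨n + 1, by omega, ?_⟩
            rw [W_succ, ← heq]
            rfl
          · exact absurd rfl (hnbb [aU] (q'' ++ [bU]))

lemma sem_Ttree : sem Ttree = abPlus := by
  ext w
  rw [show sem Ttree = sem Xtree \ (sem AAtree ⊔ sem BBtree) from rfl]
  constructor
  · rintro ⟨hX, hnot⟩
    obtain ⟨q, rfl⟩ := mem_X_iff.mp hX
    rw [mem_abPlus_iff]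
    have hnaa : ∀ p s, aU :: (q ++ [bU]) ≠ p ++ (aU :: aU :: s) := by
      intro p s h
      exact hnot (Or.inl (mem_AA_iff.mpr ⟨p, s, h⟩))
    have hnbb : ∀ p s, aU :: (q ++ [bU]) ≠ p ++ (bU :: bU :: s) := by
      intro p s h
      exact hnot (Or.inr (mem_BB_iff.mpr ⟨p, s, h⟩))
    exact rec_aux q.length q (le_refl _) hnaa hnbb
  · intro hw
    rw [mem_abPlus_iff] at hw
    obtain ⟨n, hn, rfl⟩ := hw
    constructor
    · apply mem_X_iff.mpr
      match n, hn with
      | m + 1, _ =>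
        obtain ⟨q, hq⟩ := bW_snoc m
        exact ⟨q, by rw [W_succ, hq]⟩
    · rintro (h | h)
      · obtain ⟨p, s, heq⟩ := mem_AA_iff.mp h
        exact W_no_aa n p s heq
      · obtain ⟨p, s, heq⟩ := mem_BB_iff.mp h
        exact W_no_bb n p s heq

/-- `(ab)⁺` is ADT₂-definable but not ADT₁-definable. -/
theorem abPlus_ADT2_not_ADT1 :
    (∃ t : ADT Unit, cd t ≤ 2 ∧ sem t = abPlus) ∧
      ¬ (∃ t : ADT Unit, cd t ≤ 1 ∧ sem t = abPlus) := by
  constructor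
  · exact ⟨Ttree, cd_Ttree, sem_Ttree⟩
  · rintro ⟨t, hcd, hsem⟩
    have hinf : Inf (sem t) [] [] := by
      intro N
      refine ⟨max N 1, le_max_left _ _, ?_⟩
      rw [hsem, List.nil_append, List.append_nil, mem_abPlus_iff]
      exact ⟨max N 1, by omega, rfl⟩
    obtain ⟨i₀, j₀, hj₀, hr⟩ := key t hcd [] [] hinf
    have hmem := hr i₀ j₀ (le_refl _) (le_refl _)
    rw [hsem, mem_abPlus_iff] at hmem
    obtain ⟨m, hm, heq⟩ := hmem
    have hlen := congrArg List.length heq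
    simp only [tgt, List.nil_append, List.append_nil, List.length_append,
      List.length_cons, W_length] at hlen
    omega


end ADTpaper
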